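/- Let a ∈ L^∞(ℝ) be continuous at 0. Then the matrix-valued function φ^a(t₁,t₂) = ∫_ℝ a((−t₁+s)/(2√(t₂(t₁²+1)))) H(s)[H(s)]^T ds on Π = ℝ × (0,∞) converges to a(0)·I uniformly in t₁ as t₂ → +∞: for every ε > 0 there exists Nₒ > 0 such that ‖φ^a(t₁,t₂) − a(0)·I‖ < ε for all t₂ > Nₒ and all t₁ ∈ ℝ. -/

import Mathlib

open MeasureTheory Filter Topology
open scoped Matrix.Norms.L2Operator

noncomputable section

/-- The physicists' Hermite polynomial `H_m(y) = (−1)^m e^{y²} (d/dy)^m e^{−y²}`. -/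
def hermiteH (m : ℕ) (y : ℝ) : ℝ :=
  (-1 : ℝ) ^ m * Real.exp (y ^ 2) * iteratedDeriv m (fun x => Real.exp (-x ^ 2)) y

/-- The Hermite function `h_m(y) = (2^m m! √π)^{−1/2} H_m(y) e^{−y²/2}`. -/
def hermiteFun (m : ℕ) (y : ℝ) : ℝ :=
  (Real.sqrt (2 ^ m * m.factorial * Real.sqrt Real.pi))⁻¹ * hermiteH m y *
    Real.exp (-y ^ 2 / 2)

/-- The matrix `H(y)[H(y)]ᵀ`, where `H(y) = (h_0(y), …, h_{n−1}(y))ᵀ`. -/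
def HHT (n : ℕ) (y : ℝ) : Matrix (Fin n) (Fin n) ℝ :=
  Matrix.of fun j k : Fin n => hermiteFun j y * hermiteFun k y

/-- `φ^a(t₁,t₂) = ∫_ℝ a((−t₁+s)/(2√(t₂(t₁²+1)))) H(s)[H(s)]ᵀ ds` as a complex matrix. -/
def phiA (n : ℕ) (a : ℝ → ℂ) (t₁ t₂ : ℝ) : Matrix (Fin n) (Fin n) ℂ :=
  Matrix.of fun j k : Fin n =>
    ∫ s : ℝ, a ((-t₁ + s) / (2 * Real.sqrt (t₂ * (t₁ ^ 2 + 1)))) * (HHT n s j k : ℂ)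


open Polynomial


/-- Physicists' Hermite polynomials as `Polynomial ℝ`. -/
def PH : ℕ → Polynomial ℝ
  | 0 => 1
  | (m+1) => C 2 * X * PH m - derivative (PH m)

lemma deriv_iter_gauss (m : ℕ) (x : ℝ) :
    deriv^[m] (fun y => Real.exp (-y ^ 2)) x
      = (-1 : ℝ) ^ m * (PH m).eval x * Real.exp (-x ^ 2) := by
  induction' m with m ih generalizing x
  · simp [PH]
  · have ih' : deriv^[m] (fun y => Real.exp (-y ^ 2))
        = fun x => (-1 : ℝ) ^ m * (PH m).eval x * Real.exp (-x ^ 2) := funext ih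
    rw [Function.iterate_succ_apply', ih']
    have hx : ∀ y : ℝ, HasDerivAt (fun z : ℝ => -z ^ 2) (-(2 * y)) y := by
      intro y
      exact (hasDerivAt_pow 2 y).neg.congr_deriv (by norm_num)
    have h1 : HasDerivAt (fun z : ℝ => (-1 : ℝ) ^ m * (PH m).eval z * Real.exp (-z ^ 2))
        ((-1:ℝ)^m * (derivative (PH m)).eval x * Real.exp (-x^2)
          + (-1:ℝ)^m * (PH m).eval x * (Real.exp (-x^2) * (-(2*x)))) x := by
      have hp : HasDerivAt (fun z : ℝ => (-1 : ℝ) ^ m * (PH m).eval z)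
          ((-1:ℝ)^m * (derivative (PH m)).eval x) x := ((PH m).hasDerivAt x).const_mul _
      have he : HasDerivAt (fun z : ℝ => Real.exp (-z ^ 2))
          (Real.exp (-x^2) * (-(2*x))) x := (hx x).exp
      exact (hp.mul he).congr_deriv (by ring)
    rw [h1.deriv]
    simp only [PH, eval_sub, eval_mul, eval_C, eval_X, pow_succ]
    ring

lemma hermiteH_eq_PH (m : ℕ) (y : ℝ) : hermiteH m y = (PH m).eval y := by
  rw [hermiteH, iteratedDeriv_eq_iterate, deriv_iter_gauss]
  rw [show (-1:ℝ)^m * Real.exp (y^2) * ((-1:ℝ)^m * (PH m).eval y * Real.exp (-y^2))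
      = ((-1:ℝ)^m)^2 * (PH m).eval y * (Real.exp (y^2) * Real.exp (-y^2)) by ring]
  rw [← Real.exp_add]
  simp [← pow_mul, pow_mul']

lemma PH_natDegree_le (m : ℕ) : (PH m).natDegree ≤ m := by
  induction' m with m ih
  · simp [PH]
  · rw [PH]
    refine le_trans (natDegree_sub_le _ _) (max_le ?_ ?_)
    · refine le_trans (natDegree_mul_le) ?_
      have : (C (2:ℝ) * X).natDegree ≤ 1 := by
        refine le_trans natDegree_mul_le ?_; simp
      omega
    · have := natDegree_derivative_le (PH m); omega

lemma PH_coeff_self (m : ℕ) : (PH m).coeff m = 2 ^ m := by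
  induction' m with m ih
  · simp [PH]
  · rw [PH, coeff_sub]
    have h1 : (C (2:ℝ) * X * PH m).coeff (m+1) = 2 * (PH m).coeff m := by
      rw [mul_assoc, coeff_C_mul, coeff_X_mul]
    have h2 : (derivative (PH m)).coeff (m+1) = 0 := by
      apply coeff_eq_zero_of_natDegree_lt
      have := natDegree_derivative_le (PH m)
      have := PH_natDegree_le m
      omega
    rw [h1, h2, ih]; ring

lemma integrable_monomial_gauss (n : ℕ) :
    Integrable (fun x : ℝ => x ^ n * Real.exp (-x ^ 2)) := by
  have := integrable_rpow_mul_exp_neg_mul_sq (b := 1) one_pos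
    (s := (n : ℝ)) (by exact neg_one_lt_zero.trans_le (Nat.cast_nonneg n))
  simpa [Real.rpow_natCast] using this

lemma integrable_poly_gauss (p : Polynomial ℝ) :
    Integrable (fun x : ℝ => p.eval x * Real.exp (-x ^ 2)) := by
  have h : (fun x : ℝ => p.eval x * Real.exp (-x ^ 2))
      = fun x => ∑ i ∈ Finset.range (p.natDegree + 1),
          p.coeff i * (x ^ i * Real.exp (-x ^ 2)) := by
    funext x
    rw [eval_eq_sum_range, Finset.sum_mul]
    simp [mul_assoc]
  rw [h]
  exact integrable_finset_sum _ fun i _ => (integrable_monomial_gauss i).const_mul _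

lemma tendsto_monomial_gauss_atTop (n : ℕ) :
    Tendsto (fun x : ℝ => x ^ n * Real.exp (-x ^ 2)) atTop (𝓝 0) := by
  have h := rpow_mul_exp_neg_mul_sq_isLittleO_exp_neg (b := 1) one_pos (n : ℝ)
  have h2 : (fun x : ℝ => x ^ (n:ℝ) * Real.exp (-1 * x ^ 2))
      = fun x : ℝ => x ^ n * Real.exp (-x ^ 2) := by
    funext x; rw [Real.rpow_natCast]; norm_num
  rw [h2] at h
  have h3 : Tendsto (fun x : ℝ => Real.exp (-(1/2) * x)) atTop (𝓝 0) :=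
    Real.tendsto_exp_atBot.comp (tendsto_id.const_mul_atTop_of_neg (by norm_num))
  exact h.tendsto_zero_of_tendsto h3

lemma tendsto_poly_gauss_atTop (p : Polynomial ℝ) :
    Tendsto (fun x : ℝ => p.eval x * Real.exp (-x ^ 2)) atTop (𝓝 0) := by
  have h : (fun x : ℝ => p.eval x * Real.exp (-x ^ 2))
      = fun x => ∑ i ∈ Finset.range (p.natDegree + 1),
          p.coeff i * (x ^ i * Real.exp (-x ^ 2)) := by
    funext x
    rw [eval_eq_sum_range, Finset.sum_mul]
    simp [mul_assoc]
  rw [h]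
  have : Tendsto (fun x : ℝ => ∑ i ∈ Finset.range (p.natDegree + 1),
      p.coeff i * (x ^ i * Real.exp (-x ^ 2))) atTop
      (𝓝 (∑ i ∈ Finset.range (p.natDegree + 1), p.coeff i * 0)) :=
    tendsto_finset_sum _ fun i _ => (tendsto_monomial_gauss_atTop i).const_mul _
  simpa using this

lemma tendsto_poly_gauss_atBot (p : Polynomial ℝ) :
    Tendsto (fun x : ℝ => p.eval x * Real.exp (-x ^ 2)) atBot (𝓝 0) := by
  have h : (fun x : ℝ => p.eval x * Real.exp (-x ^ 2))
      = (fun x : ℝ => (p.comp (-X)).eval x * Real.exp (-x ^ 2)) ∘ (fun x : ℝ => -x) := by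
    funext x; simp [Function.comp, eval_comp]
  rw [h]
  exact (tendsto_poly_gauss_atTop (p.comp (-X))).comp tendsto_neg_atBot_atTop

lemma hasDerivAt_poly_gauss (q : Polynomial ℝ) (x : ℝ) :
    HasDerivAt (fun y : ℝ => q.eval y * Real.exp (-y ^ 2))
      ((derivative q - C 2 * X * q).eval x * Real.exp (-x ^ 2)) x := by
  have hx : HasDerivAt (fun z : ℝ => -z ^ 2) (-(2 * x)) x := by
    exact (hasDerivAt_pow 2 x).neg.congr_deriv (by norm_num)
  have he : HasDerivAt (fun z : ℝ => Real.exp (-z ^ 2))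
      (Real.exp (-x ^ 2) * (-(2 * x))) x := hx.exp
  have := (q.hasDerivAt x).mul he
  refine this.congr_deriv ?_
  simp only [eval_sub, eval_mul, eval_C, eval_X]
  ring

lemma integral_deriv_poly_gauss (q : Polynomial ℝ) :
    ∫ y : ℝ, (derivative q - C 2 * X * q).eval y * Real.exp (-y ^ 2) = 0 := by
  set f' := fun y : ℝ => (derivative q - C 2 * X * q).eval y * Real.exp (-y ^ 2) with hf'
  set F := fun y : ℝ => q.eval y * Real.exp (-y ^ 2) with hF
  have hderiv : ∀ x : ℝ, HasDerivAt F (f' x) x := fun x => hasDerivAt_poly_gauss q x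
  have hint : Integrable f' := integrable_poly_gauss _
  have htop : Tendsto F atTop (𝓝 0) := tendsto_poly_gauss_atTop q
  have hbot : Tendsto F atBot (𝓝 0) := tendsto_poly_gauss_atBot q
  have h1 : ∫ x in Set.Iic (0:ℝ), f' x = F 0 - 0 := by
    apply MeasureTheory.integral_Iic_of_hasDerivAt_of_tendsto
      (hderiv 0).continuousAt.continuousWithinAt
      (fun x _ => hderiv x) hint.integrableOn hbot
  have h2 : ∫ x in Set.Ioi (0:ℝ), f' x = 0 - F 0 := by
    apply MeasureTheory.integral_Ioi_of_hasDerivAt_of_tendsto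
      (hderiv 0).continuousAt.continuousWithinAt
      (fun x _ => hderiv x) hint.integrableOn htop
  have := intervalIntegral.integral_Iic_add_Ioi (b := (0:ℝ))
    hint.integrableOn hint.integrableOn
  calc ∫ x : ℝ, f' x
      = (∫ x in Set.Iic (0:ℝ), f' x) + ∫ x in Set.Ioi (0:ℝ), f' x := this.symm
    _ = 0 := by rw [h1, h2]; ring

lemma ibp_step (p : Polynomial ℝ) (k : ℕ) :
    ∫ y : ℝ, (p * PH (k+1)).eval y * Real.exp (-y ^ 2)
      = ∫ y : ℝ, (derivative p * PH k).eval y * Real.exp (-y ^ 2) := by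
  have key := integral_deriv_poly_gauss (p * PH k)
  have hq : derivative (p * PH k) - C 2 * X * (p * PH k)
      = derivative p * PH k - p * PH (k+1) := by
    rw [derivative_mul, PH]; ring
  rw [hq] at key
  have hi1 : Integrable (fun y : ℝ => (derivative p * PH k).eval y * Real.exp (-y ^ 2)) :=
    integrable_poly_gauss _
  have hi2 : Integrable (fun y : ℝ => (p * PH (k+1)).eval y * Real.exp (-y ^ 2)) :=
    integrable_poly_gauss _
  have : ∫ y : ℝ, ((derivative p * PH k).eval y * Real.exp (-y ^ 2)
      - (p * PH (k+1)).eval y * Real.exp (-y ^ 2)) = 0 := by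
    rw [← key]; congr 1; funext y; simp [eval_sub, eval_mul]; ring
  rw [MeasureTheory.integral_sub hi1 hi2] at this
  linarith

lemma ibp_iter (p : Polynomial ℝ) (k : ℕ) :
    ∫ y : ℝ, (p * PH k).eval y * Real.exp (-y ^ 2)
      = ∫ y : ℝ, (derivative^[k] p).eval y * Real.exp (-y ^ 2) := by
  induction' k with k ih generalizing p
  · simp [PH]
  · rw [ibp_step p k, ih (derivative p), Function.iterate_succ_apply]

lemma PH_orth (j k : ℕ) (hjk : j ≤ k) :
    ∫ y : ℝ, (PH j).eval y * (PH k).eval y * Real.exp (-y ^ 2)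
      = if j = k then 2 ^ k * k.factorial * Real.sqrt Real.pi else 0 := by
  have h0 : ∫ y : ℝ, (PH j).eval y * (PH k).eval y * Real.exp (-y ^ 2)
      = ∫ y : ℝ, (derivative^[k] (PH j)).eval y * Real.exp (-y ^ 2) := by
    rw [← ibp_iter (PH j) k]; simp [eval_mul]
  rcases lt_or_eq_of_le hjk with h | h
  · have hz : derivative^[k] (PH j) = 0 :=
      iterate_derivative_eq_zero (lt_of_le_of_lt (PH_natDegree_le j) h)
    rw [h0, hz]
    simp [Nat.ne_of_lt h]
  · subst h
    have hdeg : (derivative^[j] (PH j)).natDegree = 0 := by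
      have := natDegree_iterate_derivative (PH j) j
      have := PH_natDegree_le j
      omega
    have hc : derivative^[j] (PH j) = C ((2:ℝ) ^ j * j.factorial) := by
      rw [eq_C_of_natDegree_le_zero hdeg.le]
      congr 1
      rw [coeff_iterate_derivative]
      simp [PH_coeff_self, Nat.descFactorial_self, mul_comm]
    rw [h0, hc]
    simp only [eval_C, if_pos rfl]
    have : ∫ y : ℝ, (2:ℝ) ^ j * (j.factorial : ℝ) * Real.exp (-y ^ 2)
        = (2:ℝ) ^ j * j.factorial * ∫ y : ℝ, Real.exp (-y ^ 2) := by
      rw [MeasureTheory.integral_const_mul]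
    rw [this]
    have hg : ∫ y : ℝ, Real.exp (-y ^ 2) = Real.sqrt Real.pi := by
      have := integral_gaussian 1
      simpa using this
    rw [hg]; simp

lemma hermiteFun_eq (m : ℕ) (y : ℝ) :
    hermiteFun m y = (Real.sqrt (2 ^ m * m.factorial * Real.sqrt Real.pi))⁻¹ *
      (PH m).eval y * Real.exp (-y ^ 2 / 2) := by
  rw [hermiteFun, hermiteH_eq_PH]

lemma hermiteFun_mul (j k : ℕ) (y : ℝ) :
    hermiteFun j y * hermiteFun k y
      = ((Real.sqrt (2 ^ j * j.factorial * Real.sqrt Real.pi))⁻¹ *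
         (Real.sqrt (2 ^ k * k.factorial * Real.sqrt Real.pi))⁻¹) *
        ((PH j * PH k).eval y * Real.exp (-y ^ 2)) := by
  have he : Real.exp (-y ^ 2 / 2) * Real.exp (-y ^ 2 / 2) = Real.exp (-y ^ 2) := by
    rw [← Real.exp_add]; ring_nf
  rw [hermiteFun_eq, hermiteFun_eq, eval_mul, ← he]; ring

lemma integrable_hermiteFun_mul (j k : ℕ) :
    Integrable (fun y : ℝ => hermiteFun j y * hermiteFun k y) := by
  simp_rw [hermiteFun_mul]
  exact (integrable_poly_gauss (PH j * PH k)).const_mul _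

lemma continuous_hermiteFun (m : ℕ) : Continuous (hermiteFun m) := by
  have : hermiteFun m = fun y => (Real.sqrt (2 ^ m * m.factorial * Real.sqrt Real.pi))⁻¹ *
      (PH m).eval y * Real.exp (-y ^ 2 / 2) := funext (hermiteFun_eq m)
  rw [this]
  fun_prop

lemma hermiteFun_orthonormal_le (j k : ℕ) (hjk : j ≤ k) :
    ∫ y : ℝ, hermiteFun j y * hermiteFun k y = if j = k then (1:ℝ) else 0 := by
  simp_rw [hermiteFun_mul]
  rw [MeasureTheory.integral_const_mul]
  have : ∫ y : ℝ, (PH j * PH k).eval y * Real.exp (-y ^ 2)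
      = if j = k then 2 ^ k * k.factorial * Real.sqrt Real.pi else 0 := by
    rw [← PH_orth j k hjk]; congr 1; funext y; rw [eval_mul]
  rw [this]
  by_cases h : j = k
  · subst h
    simp only [if_pos rfl]
    have hA : (0:ℝ) < 2 ^ j * j.factorial * Real.sqrt Real.pi := by
      have := Real.sqrt_pos.2 Real.pi_pos
      positivity
    have hs : Real.sqrt (2 ^ j * j.factorial * Real.sqrt Real.pi) ≠ 0 :=
      (Real.sqrt_pos.2 hA).ne'
    rw [← Real.mul_self_sqrt hA.le]
    field_simp
    rw [if_pos trivial, if_pos trivial, Real.sqrt_sq (Real.sqrt_nonneg _)]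
    ring
  · simp [h]

lemma hermiteFun_orthonormal (j k : ℕ) :
    ∫ y : ℝ, hermiteFun j y * hermiteFun k y = if j = k then (1:ℝ) else 0 := by
  rcases le_total j k with h | h
  · exact hermiteFun_orthonormal_le j k h
  · rw [show (fun y : ℝ => hermiteFun j y * hermiteFun k y)
        = fun y : ℝ => hermiteFun k y * hermiteFun j y from funext fun y => mul_comm _ _]
    rw [hermiteFun_orthonormal_le k j h]
    by_cases hh : j = k
    · simp [hh]
    · have : ¬ k = j := fun hkj => hh hkj.symm
      simp [hh, this]

lemma l2_opNorm_stdBasisMatrix {n : ℕ} (i j : Fin n) (c : ℂ) :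
    ‖Matrix.single i j c‖ ≤ ‖c‖ := by
  rw [Matrix.l2_opNorm_def]
  apply ContinuousLinearMap.opNorm_le_bound _ (norm_nonneg c)
  intro x
  simp only [LinearMap.coe_toContinuousLinearMap', LinearEquiv.trans_apply]
  have hxj : ‖x j‖ ≤ ‖x‖ := by
    rw [EuclideanSpace.norm_eq]
    calc ‖x j‖ = Real.sqrt (‖x j‖ ^ 2) := (Real.sqrt_sq (norm_nonneg _)).symm
      _ ≤ _ := Real.sqrt_le_sqrt (Finset.single_le_sum
          (f := fun i => ‖x i‖ ^ 2) (fun i _ => sq_nonneg _) (Finset.mem_univ j))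
  have h1 : Matrix.toEuclideanLin (Matrix.single i j c) x
      = EuclideanSpace.single i (c * x j) := by
    rw [Matrix.toEuclideanLin_apply, Matrix.single_mulVec]
    rfl
  rw [h1, EuclideanSpace.norm_single, norm_mul]
  exact mul_le_mul_of_nonneg_left hxj (norm_nonneg c)

lemma l2_opNorm_le_sum {n : ℕ} (M : Matrix (Fin n) (Fin n) ℂ) :
    ‖M‖ ≤ ∑ i : Fin n, ∑ j : Fin n, ‖M i j‖ := by
  conv_lhs => rw [Matrix.matrix_eq_sum_single M]
  refine le_trans (norm_sum_le _ _) ?_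
  refine Finset.sum_le_sum fun i _ => le_trans (norm_sum_le _ _) ?_
  exact Finset.sum_le_sum fun j _ => l2_opNorm_stdBasisMatrix i j _

lemma tail_small {f : ℝ → ℝ} (hf : Integrable f) (hf0 : ∀ s, 0 ≤ f s)
    {ε : ℝ} (hε : 0 < ε) : ∃ R > (0:ℝ), ∫ s in {s : ℝ | R < |s|}, f s < ε := by
  have hconv : Tendsto (fun R : ℝ => ∫ x in (-R)..R, f x) atTop (𝓝 (∫ x, f x)) :=
    MeasureTheory.intervalIntegral_tendsto_integral hf tendsto_neg_atTop_atBot tendsto_id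
  have hev : ∀ᶠ R : ℝ in atTop, (∫ x, f x) - (∫ x in (-R)..R, f x) < ε := by
    filter_upwards [hconv.eventually (eventually_gt_nhds (by linarith : (∫ x, f x) - ε < ∫ x, f x))]
      with R hR
    linarith
  obtain ⟨R, hR, hR0⟩ := ((hev.and (eventually_gt_atTop 0)).exists)
  refine ⟨R, hR0, ?_⟩
  have hIoc : ∫ x in (-R)..R, f x = ∫ x in Set.Ioc (-R) R, f x :=
    intervalIntegral.integral_of_le (by linarith)
  have hcompl : ∫ x in (Set.Ioc (-R) R)ᶜ, f x = (∫ x, f x) - ∫ x in Set.Ioc (-R) R, f x := by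
    have := MeasureTheory.integral_add_compl (measurableSet_Ioc (a := -R) (b := R)) hf
    linarith
  have hsub : {s : ℝ | R < |s|} ⊆ (Set.Ioc (-R) R)ᶜ := by
    intro s hs hmem
    rw [Set.mem_setOf_eq] at hs
    rcases hmem with ⟨h1, h2⟩
    rcases abs_cases s with ⟨he, _⟩ | ⟨he, _⟩ <;> rw [he] at hs <;> linarith
  have hmono : ∫ s in {s : ℝ | R < |s|}, f s ≤ ∫ x in (Set.Ioc (-R) R)ᶜ, f x := by
    apply MeasureTheory.setIntegral_mono_set hf.integrableOn
      (Filter.Eventually.of_forall hf0) (HasSubset.Subset.eventuallyLE hsub)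
  calc ∫ s in {s : ℝ | R < |s|}, f s ≤ _ := hmono
    _ = (∫ x, f x) - ∫ x in Set.Ioc (-R) R, f x := hcompl
    _ < ε := by rw [← hIoc]; exact hR

set_option maxHeartbeats 1000000 in
/-- If `a ∈ L^∞(ℝ)` is continuous at `0`, then `φ^a(t₁,t₂) → a(0)·I`
uniformly in `t₁` as `t₂ → +∞`. -/
theorem phiA_limit_top_uniform (n : ℕ) (hn : 1 ≤ n) (a : ℝ → ℂ)
    (ha_meas : Measurable a) (ha_bdd : ∃ C : ℝ, ∀ y : ℝ, ‖a y‖ ≤ C)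
    (ha_cont : ContinuousAt a 0) :
    ∀ ε > (0 : ℝ), ∃ N > (0 : ℝ), ∀ t₁ t₂ : ℝ, N < t₂ →
      ‖phiA n a t₁ t₂ - a 0 • (1 : Matrix (Fin n) (Fin n) ℂ)‖ < ε := by
  intro ε hε
  obtain ⟨C₀, hC₀⟩ := ha_bdd
  set C : ℝ := max C₀ 0 with hCdef
  have hC : ∀ y, ‖a y‖ ≤ C := fun y => (hC₀ y).trans (le_max_left _ _)
  have hC0 : 0 ≤ C := le_max_right _ _
  have hnR : (1:ℝ) ≤ (n:ℝ) := by exact_mod_cast hn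
  have hn2 : (0:ℝ) < (n:ℝ)^2 := by nlinarith
  set w : ℝ → ℝ := fun s => ∑ j : Fin n, ∑ k : Fin n,
      |hermiteFun j s * hermiteFun k s| with hwdef
  have hw_int : Integrable w :=
    integrable_finset_sum _ fun j _ =>
      integrable_finset_sum _ fun k _ => (integrable_hermiteFun_mul j k).abs
  have hw_nonneg : ∀ s, 0 ≤ w s := fun s =>
    Finset.sum_nonneg fun j _ => Finset.sum_nonneg fun k _ => abs_nonneg _
  have hw_ge : ∀ (j k : Fin n) (s : ℝ), |hermiteFun j s * hermiteFun k s| ≤ w s := by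
    intro j k s
    calc |hermiteFun j s * hermiteFun k s|
        ≤ ∑ k' : Fin n, |hermiteFun j s * hermiteFun k' s| :=
          Finset.single_le_sum (f := fun k' : Fin n => |hermiteFun j s * hermiteFun k' s|)
            (fun k' _ => abs_nonneg _) (Finset.mem_univ k)
      _ ≤ w s := Finset.single_le_sum
          (f := fun j' : Fin n => ∑ k' : Fin n, |hermiteFun j' s * hermiteFun k' s|)
          (fun j' _ => Finset.sum_nonneg fun k' _ => abs_nonneg _) (Finset.mem_univ j)
  set K : ℝ := ∫ s, w s with hKdef
  have hK0 : 0 ≤ K := integral_nonneg hw_nonneg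
  have hK1 : (0:ℝ) < K + 1 := by linarith
  set ε₁ : ℝ := ε / (2 * (n:ℝ)^2 * (K+1)) with hε₁def
  have hε₁ : 0 < ε₁ := div_pos hε (by nlinarith)
  set ε₂ : ℝ := ε / (2 * (n:ℝ)^2 * (2*C+1)) with hε₂def
  have hε₂ : 0 < ε₂ := div_pos hε (by nlinarith)
  obtain ⟨δ, hδ0, hδ⟩ := Metric.continuousAt_iff.1 ha_cont ε₁ hε₁
  obtain ⟨R, hR0, hRtail⟩ := tail_small hw_int hw_nonneg hε₂
  set N : ℝ := max 1 (((1+R)/δ)^2) with hNdef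
  refine ⟨N, lt_of_lt_of_le zero_lt_one (le_max_left _ _), ?_⟩
  intro t₁ t₂ ht₂
  have ht₂1 : (1:ℝ) < t₂ := lt_of_le_of_lt (le_max_left _ _) ht₂
  have ht₂0 : 0 < t₂ := by linarith
  set D : ℝ := 2 * Real.sqrt (t₂ * (t₁^2+1)) with hDdef
  set arg : ℝ → ℝ := fun s => (-t₁ + s) / D with hargdef
  have hsq : Real.sqrt (t₂ * (t₁^2+1)) = Real.sqrt t₂ * Real.sqrt (t₁^2+1) :=
    Real.sqrt_mul ht₂0.le _
  have hst2 : 0 < Real.sqrt t₂ := Real.sqrt_pos.2 ht₂0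
  have hu1 : 1 ≤ Real.sqrt (t₁^2+1) := by
    have h := Real.sqrt_le_sqrt (show (1:ℝ) ≤ t₁^2+1 by nlinarith)
    rwa [Real.sqrt_one] at h
  have hut : |t₁| ≤ Real.sqrt (t₁^2+1) := by
    rw [← Real.sqrt_sq_eq_abs]
    exact Real.sqrt_le_sqrt (by nlinarith)
  have hupos : 0 < Real.sqrt (t₁^2+1) := lt_of_lt_of_le one_pos hu1
  have hDpos : 0 < D := by rw [hDdef, hsq]; positivity
  have harg : ∀ s : ℝ, |arg s| ≤ (1 + |s|) / (2 * Real.sqrt t₂) := by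
    intro s
    show |(-t₁ + s) / D| ≤ _
    rw [abs_div, abs_of_pos hDpos]
    have h1 : |(-t₁ + s)| ≤ |t₁| + |s| := by
      calc |(-t₁ + s)| ≤ |(-t₁)| + |s| := abs_add_le _ _
        _ = |t₁| + |s| := by rw [abs_neg]
    have key : |t₁| + |s| ≤ (1 + |s|) * Real.sqrt (t₁^2+1) := by
      nlinarith [mul_le_mul_of_nonneg_left hu1 (abs_nonneg s)]
    calc |(-t₁+s)| / D ≤ (|t₁| + |s|) / D := (div_le_div_iff_of_pos_right hDpos).2 h1
      _ ≤ ((1 + |s|) * Real.sqrt (t₁^2+1)) / (2 * (Real.sqrt t₂ * Real.sqrt (t₁^2+1))) := by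
          rw [hDdef, hsq]; exact (div_le_div_iff_of_pos_right (by positivity)).2 key
      _ = (1 + |s|) / (2 * Real.sqrt t₂) := by
          field_simp
  have hsqrtN : (1+R)/δ ≤ Real.sqrt t₂ := by
    have h1 : ((1+R)/δ)^2 ≤ N := le_max_right _ _
    have h2 : Real.sqrt (((1+R)/δ)^2) ≤ Real.sqrt t₂ := Real.sqrt_le_sqrt (by linarith)
    rwa [Real.sqrt_sq (by positivity)] at h2
  have hsmall : ∀ s : ℝ, |s| ≤ R → ‖a (arg s) - a 0‖ < ε₁ := by
    intro s hs
    have h1 : |arg s| ≤ (1+R)/(2*Real.sqrt t₂) := by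
      refine le_trans (harg s) ?_
      exact (div_le_div_iff_of_pos_right (by positivity)).2 (by linarith)
    have hdd : δ * ((1+R)/δ) = 1+R := mul_div_cancel₀ _ hδ0.ne'
    have h2 : (1+R)/(2*Real.sqrt t₂) < δ := by
      rw [div_lt_iff₀ (by positivity)]
      have hmul : δ * ((1+R)/δ) ≤ δ * Real.sqrt t₂ := mul_le_mul_of_nonneg_left hsqrtN hδ0.le
      rw [hdd] at hmul
      have hrr : δ * (2*Real.sqrt t₂) = 2*(δ*Real.sqrt t₂) := by ring
      rw [hrr]
      linarith
    rw [← dist_eq_norm]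
    apply hδ
    rw [Real.dist_eq, sub_zero]
    exact lt_of_le_of_lt h1 h2
  have hmeas_arg : Measurable arg := (measurable_const.add measurable_id).div_const D
  have hintH : ∀ j k : Fin n,
      Integrable (fun s : ℝ => ((hermiteFun j s * hermiteFun k s : ℝ) : ℂ)) :=
    fun j k => (integrable_hermiteFun_mul j k).ofReal
  have hintf : ∀ j k : Fin n,
      Integrable (fun s : ℝ => a (arg s) * ((hermiteFun j s * hermiteFun k s : ℝ) : ℂ)) := by
    intro j k
    exact (hintH j k).bdd_mul ((ha_meas.comp hmeas_arg).aestronglyMeasurable)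
      (Eventually.of_forall fun s => hC _)
  have hentry : ∀ j k : Fin n,
      (phiA n a t₁ t₂ - a 0 • (1 : Matrix (Fin n) (Fin n) ℂ)) j k
        = ∫ s : ℝ, (a (arg s) - a 0) * ((hermiteFun j s * hermiteFun k s : ℝ) : ℂ) := by
    intro j k
    have horth : (∫ s : ℝ, ((hermiteFun j s * hermiteFun k s : ℝ) : ℂ))
        = if j = k then (1:ℂ) else 0 := by
      have hcast : (∫ s : ℝ, ((hermiteFun j s * hermiteFun k s : ℝ) : ℂ))
          = ((∫ s : ℝ, hermiteFun j s * hermiteFun k s : ℝ) : ℂ) := integral_ofReal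
      rw [hcast, hermiteFun_orthonormal]
      by_cases h : (j:ℕ) = (k:ℕ)
      · have hjk : j = k := Fin.ext h
        simp [h, hjk]
      · have hjk : j ≠ k := fun hh => h (by rw [hh])
        simp [h, hjk]
    have h1 : (phiA n a t₁ t₂) j k
        = ∫ s : ℝ, a (arg s) * ((hermiteFun j s * hermiteFun k s : ℝ) : ℂ) := rfl
    rw [Matrix.sub_apply, h1, Matrix.smul_apply, Matrix.one_apply, smul_eq_mul]
    rw [show (a 0) * (if j = k then (1:ℂ) else 0)
        = a 0 * ∫ s : ℝ, ((hermiteFun j s * hermiteFun k s : ℝ) : ℂ) by rw [horth]]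
    rw [← MeasureTheory.integral_const_mul]
    rw [← MeasureTheory.integral_sub (hintf j k) ((hintH j k).const_mul (a 0))]
    congr 1; funext s; ring
  set tailSet : Set ℝ := {s : ℝ | R < |s|} with htailset
  have htail_meas : MeasurableSet tailSet :=
    measurableSet_lt measurable_const continuous_abs.measurable
  have htail0 : 0 ≤ ∫ s in tailSet, w s :=
    MeasureTheory.setIntegral_nonneg htail_meas fun s _ => hw_nonneg s
  have hbound_int : Integrable (fun s => ε₁ * w s + (2*C) * tailSet.indicator w s) :=
    (hw_int.const_mul ε₁).add ((hw_int.indicator htail_meas).const_mul (2*C))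
  have hentry_bound : ∀ j k : Fin n,
      ‖(phiA n a t₁ t₂ - a 0 • (1 : Matrix (Fin n) (Fin n) ℂ)) j k‖ < ε / (n:ℝ)^2 := by
    intro j k
    rw [hentry j k]
    have hint2 : Integrable (fun s : ℝ =>
        (a (arg s) - a 0) * ((hermiteFun j s * hermiteFun k s : ℝ) : ℂ)) := by
      have := (hintf j k).sub ((hintH j k).const_mul (a 0))
      apply this.congr
      filter_upwards with s
      simp only [Pi.sub_apply]
      ring
    calc ‖∫ s : ℝ, (a (arg s) - a 0) * ((hermiteFun j s * hermiteFun k s : ℝ) : ℂ)‖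
        ≤ ∫ s : ℝ, ‖(a (arg s) - a 0) * ((hermiteFun j s * hermiteFun k s : ℝ) : ℂ)‖ :=
          norm_integral_le_integral_norm _
      _ ≤ ∫ s : ℝ, (ε₁ * w s + (2*C) * tailSet.indicator w s) := by
          apply MeasureTheory.integral_mono hint2.norm hbound_int
          intro s
          simp only [norm_mul, Complex.norm_real, Real.norm_eq_abs, ← abs_mul]
          by_cases hs : |s| ≤ R
          · have h1 : ‖a (arg s) - a 0‖ ≤ ε₁ := (hsmall s hs).le
            have h2 : 0 ≤ (2*C) * tailSet.indicator w s :=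
              mul_nonneg (by linarith) (Set.indicator_nonneg (fun s _ => hw_nonneg s) s)
            calc ‖a (arg s) - a 0‖ * |hermiteFun j s * hermiteFun k s|
                ≤ ε₁ * w s := mul_le_mul h1 (hw_ge j k s) (abs_nonneg _) hε₁.le
              _ ≤ _ := le_add_of_nonneg_right h2
          · have hmem : s ∈ tailSet := by
              rw [htailset, Set.mem_setOf_eq]; exact not_le.1 hs
            rw [Set.indicator_of_mem hmem]
            have h1 : ‖a (arg s) - a 0‖ ≤ 2*C := by
              calc ‖a (arg s) - a 0‖ ≤ ‖a (arg s)‖ + ‖a 0‖ := norm_sub_le _ _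
                _ ≤ C + C := add_le_add (hC _) (hC _)
                _ = 2*C := by ring
            calc ‖a (arg s) - a 0‖ * |hermiteFun j s * hermiteFun k s|
                ≤ (2*C) * w s := mul_le_mul h1 (hw_ge j k s) (abs_nonneg _) (by linarith)
              _ ≤ _ := le_add_of_nonneg_left (mul_nonneg hε₁.le (hw_nonneg s))
      _ = ε₁ * K + (2*C) * ∫ s in tailSet, w s := by
          rw [MeasureTheory.integral_add (hw_int.const_mul ε₁)
            ((hw_int.indicator htail_meas).const_mul (2*C)),
            MeasureTheory.integral_const_mul, MeasureTheory.integral_const_mul,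
            MeasureTheory.integral_indicator htail_meas]
      _ < ε / (n:ℝ)^2 := by
          have e1 : ε₁ * (K+1) = ε / (2*(n:ℝ)^2) := by
            rw [hε₁def]; field_simp
          have e2 : (2*C+1) * ε₂ = ε / (2*(n:ℝ)^2) := by
            rw [hε₂def]; field_simp
          have e3 : ε/(n:ℝ)^2 = 2*(ε/(2*(n:ℝ)^2)) := by field_simp
          nlinarith [mul_le_mul_of_nonneg_left hRtail.le (by linarith : (0:ℝ) ≤ 2*C)]
  have hfin : Nonempty (Fin n) := ⟨⟨0, hn⟩⟩
  calc ‖phiA n a t₁ t₂ - a 0 • (1 : Matrix (Fin n) (Fin n) ℂ)‖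
      ≤ ∑ j : Fin n, ∑ k : Fin n,
          ‖(phiA n a t₁ t₂ - a 0 • (1 : Matrix (Fin n) (Fin n) ℂ)) j k‖ :=
        l2_opNorm_le_sum _
    _ < ∑ j : Fin n, ∑ k : Fin n, ε / (n:ℝ)^2 := by
        apply Finset.sum_lt_sum_of_nonempty Finset.univ_nonempty
        intro j _
        exact Finset.sum_lt_sum_of_nonempty Finset.univ_nonempty fun k _ => hentry_bound j k
    _ = ε := by
        rw [Finset.sum_const, Finset.sum_const, Finset.card_univ, Fintype.card_fin,
          nsmul_eq_mul, nsmul_eq_mul]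
        field_simp
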